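/- Uniform lower bound on normals paired against the staircase direction: Let ī := (Id, 2·Id, …, K·Id) ∈ (S^D)^K, where Id is the D×D identity matrix. For every ν ∈ (S^D)^K with −ν ∈ Ū_K^*, one has −ī·ν ≥ Σ_{k=1}^K |Σ_{ℓ=k}^K ν_ℓ|. Consequently, there exists a constant c > 0, depending only on D and K, such that for every ν ∈ (S^D)^K with |ν| = 1 and −ν ∈ Ū_K^*, one has −ī·ν ≥ c. -/

import Mathlib

noncomputable section

namespace SpinGlassStmt

/-- Index set for the coordinates of a symmetric `D × D` matrix. -/
def SIdx (D : ℕ) := {p : Fin D × Fin D // p.1 ≤ p.2}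

instance (D : ℕ) : Fintype (SIdx D) := by unfold SIdx; infer_instance
instance (D : ℕ) : DecidableEq (SIdx D) := by unfold SIdx; infer_instance

/-- Coordinates of an element of `S^D`. -/
abbrev Sym (D : ℕ) := SIdx D → ℝ

/-- The symmetric matrix associated with an element of `Sym D`. -/
def toMat {D : ℕ} (a : Sym D) : Matrix (Fin D) (Fin D) ℝ :=
  Matrix.of fun i j => if h : i ≤ j then a ⟨(i, j), h⟩ else a ⟨(j, i), le_of_not_ge h⟩

/-- Positive semidefiniteness, as a predicate on `Sym D`. -/
def PSD {D : ℕ} (a : Sym D) : Prop := (toMat a).PosSemidef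

/-- Trace (Frobenius) inner product `a · b = tr (a b)` on `S^D`. -/
def sdot {D : ℕ} (a b : Sym D) : ℝ :=
  ∑ i : Fin D, ∑ j : Fin D, toMat a i j * toMat b i j

/-- The norm `|a| = (a · a)^(1/2)` on `S^D`. -/
def snorm {D : ℕ} (a : Sym D) : ℝ := Real.sqrt (sdot a a)

/-- The space `(S^D)^K`. -/
abbrev EK (D K : ℕ) := Fin K → Sym D

/-- Inner product on `(S^D)^K`:  `x · y = ∑ k, x k · y k`. -/
def kdot {D K : ℕ} (x y : EK D K) : ℝ := ∑ k : Fin K, sdot (x k) (y k)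

/-- The norm `|x| = (x · x)^(1/2)` on `(S^D)^K`. -/
def knorm {D K : ℕ} (x : EK D K) : ℝ := Real.sqrt (kdot x x)

/-- The closed convex cone `Ū_K` of nondecreasing tuples of positive semidefinite
matrices. -/
def Ubar (D K : ℕ) : Set (EK D K) :=
  {x | (∀ k, PSD (x k)) ∧ ∀ i j : Fin K, i ≤ j → PSD (x j - x i)}

/-- The dual cone `Ū_K^*`. -/
def Udual (D K : ℕ) : Set (EK D K) := {x | ∀ v ∈ Ubar D K, 0 ≤ kdot x v}

/-- The set `n(x)` of outer normal vectors to `Ū_K` at a boundary point `x`. -/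
def normalCone {D K : ℕ} (x : EK D K) : Set (EK D K) :=
  {ν | knorm ν = 1 ∧ ∀ y ∈ Ubar D K, kdot (y - x) ν ≤ 0}

/-- Weight of a coordinate of a symmetric matrix (diagonal entries count once,
off-diagonal entries twice) in the trace inner product. -/
def wt {D : ℕ} (q : SIdx D) : ℝ := if q.val.1 = q.val.2 then 1 else 2

/-- The spatial gradient `∇φ ∈ (S^D)^K` of a function `φ = φ(t, x)`, i.e. the
representative of the spatial differential with respect to the trace inner
product. -/
def grad {D K : ℕ} (φ : ℝ × EK D K → ℝ) (p : ℝ × EK D K) : EK D K :=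
  fun k q => fderiv ℝ φ p (0, Pi.single k (Pi.single q 1)) / wt q

/-- The time derivative `∂_t φ` of a function `φ = φ(t, x)`. -/
def tderiv {D K : ℕ} (φ : ℝ × EK D K → ℝ) (p : ℝ × EK D K) : ℝ := fderiv ℝ φ p (1, 0)

/-- Viscosity subsolution of `∂_t f - H(∇f) = 0` in `S × U_K` with Neumann
boundary condition `n · ∇f = 0` on `S × ∂U_K`, where `S` is the set of times. -/
def HJSub (D K : ℕ) (S : Set ℝ) (H : EK D K → ℝ) (u : ℝ × EK D K → ℝ) : Prop :=
  ∀ φ : ℝ × EK D K → ℝ, ContDiff ℝ (⊤ : ℕ∞) φ → ∀ t : ℝ, ∀ x : EK D K,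
    t ∈ S → x ∈ Ubar D K →
    IsLocalMaxOn (fun p => u p - φ p) (S ×ˢ Ubar D K) (t, x) →
    (x ∈ interior (Ubar D K) → tderiv φ (t, x) - H (grad φ (t, x)) ≤ 0) ∧
    (x ∉ interior (Ubar D K) →
      min (sInf ((fun ν => kdot ν (grad φ (t, x))) '' normalCone x))
        (tderiv φ (t, x) - H (grad φ (t, x))) ≤ 0)

/-- Viscosity supersolution of `∂_t f - H(∇f) = 0` in `S × U_K` with Neumann
boundary condition `n · ∇f = 0` on `S × ∂U_K`. -/
def HJSuper (D K : ℕ) (S : Set ℝ) (H : EK D K → ℝ) (u : ℝ × EK D K → ℝ) : Prop :=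
  ∀ φ : ℝ × EK D K → ℝ, ContDiff ℝ (⊤ : ℕ∞) φ → ∀ t : ℝ, ∀ x : EK D K,
    t ∈ S → x ∈ Ubar D K →
    IsLocalMinOn (fun p => u p - φ p) (S ×ˢ Ubar D K) (t, x) →
    (x ∈ interior (Ubar D K) → 0 ≤ tderiv φ (t, x) - H (grad φ (t, x))) ∧
    (x ∉ interior (Ubar D K) →
      0 ≤ max (sSup ((fun ν => kdot ν (grad φ (t, x))) '' normalCone x))
        (tderiv φ (t, x) - H (grad φ (t, x))))

/-- Local Lipschitz continuity of the nonlinearity `H`, with respect to the norm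
derived from the trace inner product. -/
def LocLip {D K : ℕ} (H : EK D K → ℝ) : Prop :=
  ∀ x : EK D K, ∃ ε > (0:ℝ), ∃ L : ℝ, ∀ y z : EK D K,
    knorm (y - x) ≤ ε → knorm (z - x) ≤ ε → |H y - H z| ≤ L * knorm (y - z)


/-- The "staircase" direction `ī = (Id, 2·Id, …, K·Id) ∈ (S^D)^K`, in
coordinates (the `k`-th entry, `0`-based, is `(k+1) · Id`). -/
def iBar (D K : ℕ) : EK D K :=
  fun k q => if q.val.1 = q.val.2 then ((k : ℕ) + 1 : ℝ) else 0


section Aux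

open scoped Matrix

variable {D K : ℕ}

lemma toMat_apply (a : Sym D) (i j : Fin D) :
    toMat a i j = if h : i ≤ j then a ⟨(i, j), h⟩ else a ⟨(j, i), le_of_not_ge h⟩ := rfl

lemma toMat_symm (a : Sym D) (i j : Fin D) : toMat a j i = toMat a i j := by
  rw [toMat_apply, toMat_apply]
  rcases le_total i j with h | h
  · rcases eq_or_lt_of_le h with rfl | hlt
    · simp
    · rw [dif_neg (not_le.mpr hlt), dif_pos h]
  · rcases eq_or_lt_of_le h with rfl | hlt
    · simp
    · rw [dif_pos h, dif_neg (not_le.mpr hlt)]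

lemma toMat_sum {ι : Type*} (s : Finset ι) (f : ι → Sym D) (i j : Fin D) :
    toMat (∑ ℓ ∈ s, f ℓ) i j = ∑ ℓ ∈ s, toMat (f ℓ) i j := by
  simp only [toMat_apply]
  split_ifs with h <;> exact Finset.sum_apply _ _ _

lemma toMat_sub (a b : Sym D) (i j : Fin D) :
    toMat (a - b) i j = toMat a i j - toMat b i j := by
  simp only [toMat_apply]
  split_ifs with h <;> rfl

lemma toMat_neg (a : Sym D) (i j : Fin D) : toMat (-a) i j = -(toMat a i j) := by
  simp only [toMat_apply]
  split_ifs with h <;> rfl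

lemma toMat_zero (i j : Fin D) : toMat (0 : Sym D) i j = 0 := by
  simp only [toMat_apply]
  split_ifs with h <;> rfl

lemma sdot_eq (a b : Sym D) :
    sdot a b = ∑ p : Fin D × Fin D, toMat a p.1 p.2 * toMat b p.1 p.2 := by
  rw [sdot]
  exact (Fintype.sum_prod_type' (fun i j => toMat a i j * toMat b i j)).symm

lemma sdot_sum_left {ι : Type*} (s : Finset ι) (f : ι → Sym D) (b : Sym D) :
    sdot (∑ ℓ ∈ s, f ℓ) b = ∑ ℓ ∈ s, sdot (f ℓ) b := by
  simp only [sdot_eq, toMat_sum, Finset.sum_mul]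
  rw [Finset.sum_comm]

lemma sdot_neg_left (a b : Sym D) : sdot (-a) b = -(sdot a b) := by
  simp [sdot_eq, toMat_neg, Finset.sum_neg_distrib]

lemma sdot_zero_right (a : Sym D) : sdot a 0 = 0 := by
  simp [sdot_eq, toMat_zero]

lemma sdot_self_nonneg (a : Sym D) : 0 ≤ sdot a a := by
  rw [sdot_eq]
  exact Finset.sum_nonneg fun p _ => mul_self_nonneg _

lemma snorm_nonneg (a : Sym D) : 0 ≤ snorm a := Real.sqrt_nonneg _

lemma snorm_zero : snorm (0 : Sym D) = 0 := by
  simp [snorm, sdot_zero_right]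

lemma sq_snorm (a : Sym D) : snorm a ^ 2 = sdot a a := Real.sq_sqrt (sdot_self_nonneg a)

lemma PSD_zero : PSD (0 : Sym D) := by
  have h : toMat (0 : Sym D) = 0 := by ext i j; exact toMat_zero i j
  unfold PSD
  rw [h]
  exact Matrix.PosSemidef.zero

/-- Embedding into Euclidean space, to get the triangle inequality. -/
def emb (a : Sym D) : EuclideanSpace ℝ (Fin D × Fin D) :=
  WithLp.toLp 2 (fun p : Fin D × Fin D => toMat a p.1 p.2)

lemma snorm_eq_norm (a : Sym D) : snorm a = ‖emb a‖ := by
  rw [EuclideanSpace.norm_eq, snorm, sdot_eq]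
  congr 1
  refine Finset.sum_congr rfl fun p _ => ?_
  simp [emb, Real.norm_eq_abs, sq_abs, sq]

lemma snorm_sub_le (a b : Sym D) : snorm (a - b) ≤ snorm a + snorm b := by
  have h : emb (a - b) = emb a - emb b := by
    ext p
    simp [emb, toMat_sub]
  rw [snorm_eq_norm, snorm_eq_norm, snorm_eq_norm, h]
  exact norm_sub_le _ _

/-- If `a` pairs nonpositively with every PSD element, then `-toMat a` is PSD. -/
lemma nsd_of_sdot_nonpos (a : Sym D)
    (h : ∀ b : Sym D, PSD b → sdot a b ≤ 0) : (-(toMat a)).PosSemidef := by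
  rw [Matrix.posSemidef_iff_dotProduct_mulVec]
  constructor
  · ext i j
    simp [Matrix.conjTranspose_apply, toMat_symm]
  · intro x
    set b : Sym D := fun q => x q.val.1 * x q.val.2 with hb
    have hbm : ∀ i j, toMat b i j = x i * x j := by
      intro i j
      rw [toMat_apply]
      split_ifs with h' <;> simp [hb, mul_comm]
    have hmv : ∀ y : Fin D → ℝ, toMat b *ᵥ y = fun i => x i * ∑ j, x j * y j := by
      intro y
      funext i
      simp only [Matrix.mulVec, dotProduct, hbm, mul_assoc, ← Finset.mul_sum]
    have hPSD : PSD b := by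
      rw [PSD, Matrix.posSemidef_iff_dotProduct_mulVec]
      constructor
      · ext i j
        simp [Matrix.conjTranspose_apply, hbm, mul_comm]
      · intro y
        rw [hmv]
        have heq : star y ⬝ᵥ (fun i => x i * ∑ j, x j * y j) =
            (∑ j, x j * y j) * (∑ j, x j * y j) := by
          simp only [dotProduct, star_trivial]
          rw [Finset.sum_mul]
          exact Finset.sum_congr rfl fun i _ => by ring
        rw [heq]
        exact mul_self_nonneg _
    have hle := h b hPSD
    have hdot : star x ⬝ᵥ (toMat a *ᵥ x) = sdot a b := by
      rw [sdot]
      simp only [dotProduct, Matrix.mulVec, star_trivial, Finset.mul_sum, hbm]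
      exact Finset.sum_congr rfl fun i _ => Finset.sum_congr rfl fun j _ => by ring
    have : star x ⬝ᵥ ((-(toMat a)) *ᵥ x) = -(sdot a b) := by
      rw [Matrix.neg_mulVec, dotProduct_neg, hdot]
    rw [this]
    linarith

/-- Frobenius norm of a matrix whose negation is PSD is at most minus its trace. -/
lemma snorm_le_neg_trace (a : Sym D) (h : (-(toMat a)).PosSemidef) :
    snorm a ≤ -∑ i, toMat a i i := by
  set p : Matrix (Fin D) (Fin D) ℝ := -(toMat a) with hp
  have hpsymm : ∀ i j, p j i = p i j := by
    intro i j
    simp [hp, toMat_symm]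
  have hsingle : ∀ i j : Fin D, Pi.single i (1:ℝ) ⬝ᵥ p *ᵥ Pi.single j 1 = p i j := by
    intro i j
    rw [Matrix.mulVec_single, single_dotProduct]
    simp
  have hdiag : ∀ i, 0 ≤ p i i := by
    intro i
    have := (Matrix.posSemidef_iff_dotProduct_mulVec.mp h).2 (Pi.single i 1)
    rwa [star_trivial, hsingle] at this
  have hent : ∀ i j, p i j ^ 2 ≤ p i i * p j j := by
    intro i j
    rcases eq_or_ne i j with rfl | hij
    · rw [sq]
    · have hq : ∀ t : ℝ, 0 ≤ p j j * (t * t) + (2 * p i j) * t + p i i := by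
        intro t
        have := (Matrix.posSemidef_iff_dotProduct_mulVec.mp h).2 ((Pi.single i 1 : Fin D → ℝ) + t • (Pi.single j 1 : Fin D → ℝ))
        rw [star_trivial, Matrix.mulVec_add, Matrix.mulVec_smul, add_dotProduct,
          smul_dotProduct, dotProduct_add, dotProduct_add,
          dotProduct_smul, dotProduct_smul, hsingle, hsingle, hsingle, hsingle]
          at this
        simp only [smul_eq_mul] at this
        rw [hpsymm i j] at this
        linear_combination this
      have hd := discrim_le_zero hq
      rw [discrim] at hd
      nlinarith [hd]
    
  have htr : 0 ≤ ∑ i, p i i := Finset.sum_nonneg fun i _ => hdiag i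
  have hsum : sdot a a ≤ (∑ i, p i i) ^ 2 := by
    rw [sdot]
    calc ∑ i, ∑ j, toMat a i j * toMat a i j
        = ∑ i, ∑ j, p i j ^ 2 := by
          refine Finset.sum_congr rfl fun i _ => Finset.sum_congr rfl fun j _ => ?_
          simp [hp, sq]
      _ ≤ ∑ i, ∑ j, p i i * p j j :=
          Finset.sum_le_sum fun i _ => Finset.sum_le_sum fun j _ => hent i j
      _ = (∑ i, p i i) ^ 2 := by
          rw [sq, Finset.sum_mul_sum]
  have : snorm a ≤ ∑ i, p i i := by
    rw [snorm]
    calc Real.sqrt (sdot a a) ≤ Real.sqrt ((∑ i, p i i) ^ 2) := Real.sqrt_le_sqrt hsum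
      _ = ∑ i, p i i := Real.sqrt_sq htr
  calc snorm a ≤ ∑ i, p i i := this
    _ = -∑ i, toMat a i i := by simp [hp, Finset.sum_neg_distrib]

lemma toMat_iBar (k : Fin K) (i j : Fin D) :
    toMat (iBar D K k) i j = if i = j then ((k : ℕ) + 1 : ℝ) else 0 := by
  rw [toMat_apply]
  by_cases hle : i ≤ j
  · rw [dif_pos hle]; rfl
  · rw [dif_neg hle]
    have hij : ¬ i = j := fun e => hle (e ▸ le_refl _)
    have hji : ¬ j = i := fun e => hij e.symm
    show (if j = i then ((k : ℕ) + 1 : ℝ) else 0) = _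
    rw [if_neg hji, if_neg hij]

lemma sdot_iBar (k : Fin K) (b : Sym D) :
    sdot (iBar D K k) b = ((k : ℕ) + 1 : ℝ) * ∑ i, toMat b i i := by
  rw [sdot]
  simp only [toMat_iBar, ite_mul, zero_mul]
  rw [Finset.mul_sum]
  refine Finset.sum_congr rfl fun i _ => ?_
  rw [Finset.sum_ite_eq]
  simp

end Aux

/-- Uniform lower bound on normals paired against the
staircase direction: if `-ν ∈ Ū_K^*`, then `-ī · ν ≥ ∑_k |∑_{ℓ ≥ k} ν_ℓ|`,
and consequently there is a constant `c > 0`, depending only on `D` and `K`,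
with `-ī · ν ≥ c` for all unit vectors `ν` with `-ν ∈ Ū_K^*`. -/
theorem staircase_pairing_lower_bound (D K : ℕ) (hD : 1 ≤ D) (hK : 1 ≤ K) :
    (∀ ν : EK D K, -ν ∈ Udual D K →
      ∑ k : Fin K, snorm (∑ ℓ ∈ Finset.Ici k, ν ℓ) ≤ -(kdot (iBar D K) ν)) ∧
    (∃ c : ℝ, 0 < c ∧ ∀ ν : EK D K, knorm ν = 1 → -ν ∈ Udual D K →
      c ≤ -(kdot (iBar D K) ν)) := by
  have hNSD : ∀ ν : EK D K, -ν ∈ Udual D K → ∀ k : Fin K,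
      (-(toMat (∑ ℓ ∈ Finset.Ici k, ν ℓ))).PosSemidef := by
    intro ν hν k
    apply nsd_of_sdot_nonpos
    intro b hb
    have hv : (fun k' => if k ≤ k' then b else 0) ∈ Ubar D K := by
      refine ⟨fun k' => ?_, fun i j hij => ?_⟩
      · by_cases h : k ≤ k'
        · simpa [h] using hb
        · simpa [h] using PSD_zero
      · by_cases hi : k ≤ i
        · have hj : k ≤ j := le_trans hi hij
          simpa [hi, hj, sub_self] using PSD_zero
        · by_cases hj : k ≤ j
          · simpa [hi, hj, sub_zero] using hb
          · simpa [hi, hj, sub_zero] using PSD_zero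
    have h0 := hν _ hv
    have h1 : ∀ k' : Fin K, sdot ((-ν) k') (if k ≤ k' then b else 0)
        = if k ≤ k' then -(sdot (ν k') b) else 0 := by
      intro k'
      by_cases h : k ≤ k' <;> simp [h, sdot_neg_left, sdot_zero_right]
    have hkd : kdot (-ν) (fun k' => if k ≤ k' then b else 0)
        = -(sdot (∑ ℓ ∈ Finset.Ici k, ν ℓ) b) := by
      calc kdot (-ν) (fun k' => if k ≤ k' then b else 0)
          = ∑ k' : Fin K, if k ≤ k' then -(sdot (ν k') b) else 0 :=
            Finset.sum_congr rfl fun k' _ => h1 k'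
        _ = ∑ k' ∈ Finset.univ.filter (fun k' => k ≤ k'), -(sdot (ν k') b) :=
            (Finset.sum_filter _ _).symm
        _ = ∑ k' ∈ Finset.Ici k, -(sdot (ν k') b) := by
            apply Finset.sum_congr _ (fun _ _ => rfl)
            ext k'; simp
        _ = -(∑ k' ∈ Finset.Ici k, sdot (ν k') b) := by
            rw [Finset.sum_neg_distrib]
        _ = -(sdot (∑ ℓ ∈ Finset.Ici k, ν ℓ) b) := by rw [sdot_sum_left]
    rw [hkd] at h0
    linarith
  have main : ∀ ν : EK D K, -ν ∈ Udual D K →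
      ∑ k : Fin K, snorm (∑ ℓ ∈ Finset.Ici k, ν ℓ) ≤ -(kdot (iBar D K) ν) := by
    intro ν hν
    have hbound : ∀ k : Fin K, snorm (∑ ℓ ∈ Finset.Ici k, ν ℓ)
        ≤ -∑ i, toMat (∑ ℓ ∈ Finset.Ici k, ν ℓ) i i :=
      fun k => snorm_le_neg_trace _ (hNSD ν hν k)
    have htr : kdot (iBar D K) ν
        = ∑ k : Fin K, ∑ i, toMat (∑ ℓ ∈ Finset.Ici k, ν ℓ) i i := by
      rw [kdot]
      simp only [sdot_iBar]
      have hR : ∀ k : Fin K, ∑ i, toMat (∑ ℓ ∈ Finset.Ici k, ν ℓ) i i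
          = ∑ ℓ ∈ Finset.Ici k, ∑ i, toMat (ν ℓ) i i := by
        intro k
        simp only [toMat_sum]
        rw [Finset.sum_comm]
      simp only [hR]
      set g : Fin K → ℝ := fun ℓ => ∑ i, toMat (ν ℓ) i i with hg
      have hfil : ∀ k : Fin K, ∑ ℓ ∈ Finset.Ici k, g ℓ
          = ∑ ℓ : Fin K, if k ≤ ℓ then g ℓ else 0 := by
        intro k
        rw [← Finset.sum_filter]
        apply Finset.sum_congr _ (fun _ _ => rfl)
        ext ℓ; simp
      have hIic : ∀ ℓ : Fin K, (∑ k : Fin K, if k ≤ ℓ then g ℓ else 0)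
          = ((ℓ : ℕ) + 1 : ℝ) * g ℓ := by
        intro ℓ
        rw [← Finset.sum_filter]
        have hfl : Finset.univ.filter (fun k : Fin K => k ≤ ℓ) = Finset.Iic ℓ := by
          ext k; simp
        rw [hfl, Finset.sum_const, Fin.card_Iic, nsmul_eq_mul]
        push_cast
        ring
      calc ∑ k : Fin K, ((k : ℕ) + 1 : ℝ) * g k
          = ∑ ℓ : Fin K, ∑ k : Fin K, if k ≤ ℓ then g ℓ else 0 :=
            Finset.sum_congr rfl fun ℓ _ => (hIic ℓ).symm
        _ = ∑ k : Fin K, ∑ ℓ : Fin K, if k ≤ ℓ then g ℓ else 0 := Finset.sum_comm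
        _ = ∑ k : Fin K, ∑ ℓ ∈ Finset.Ici k, g ℓ :=
            Finset.sum_congr rfl fun k _ => (hfil k).symm
    calc ∑ k : Fin K, snorm (∑ ℓ ∈ Finset.Ici k, ν ℓ)
        ≤ ∑ k : Fin K, (-∑ i, toMat (∑ ℓ ∈ Finset.Ici k, ν ℓ) i i) :=
          Finset.sum_le_sum fun k _ => hbound k
      _ = -(∑ k : Fin K, ∑ i, toMat (∑ ℓ ∈ Finset.Ici k, ν ℓ) i i) := by
          rw [Finset.sum_neg_distrib]
      _ = -(kdot (iBar D K) ν) := by rw [htr]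
  refine ⟨main, 1/2, by norm_num, fun ν hn hν => ?_⟩
  set S : ℕ → Sym D := fun n => ∑ ℓ ∈ Finset.univ.filter (fun ℓ : Fin K => n ≤ (ℓ:ℕ)), ν ℓ
    with hS
  have hSK : S K = 0 := by
    simp only [hS]
    have hfl : Finset.univ.filter (fun ℓ : Fin K => K ≤ (ℓ:ℕ)) = ∅ := by
      ext ℓ
      simp only [Finset.mem_filter, Finset.mem_univ, true_and, Finset.notMem_empty, iff_false]
      have := ℓ.isLt
      omega
    rw [hfl, Finset.sum_empty]
  have hσS : ∀ k : Fin K, (∑ ℓ ∈ Finset.Ici k, ν ℓ) = S k.val := by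
    intro k
    simp only [hS]
    apply Finset.sum_congr _ (fun _ _ => rfl)
    ext ℓ
    simp only [Finset.mem_Ici, Finset.mem_filter, Finset.mem_univ, true_and, Fin.le_def]
  have hstep : ∀ k : Fin K, S k.val = ν k + S (k.val + 1) := by
    intro k
    simp only [hS]
    have hins : Finset.univ.filter (fun ℓ : Fin K => k.val ≤ (ℓ:ℕ))
        = insert k (Finset.univ.filter (fun ℓ : Fin K => k.val + 1 ≤ (ℓ:ℕ))) := by
      ext ℓ
      simp only [Finset.mem_filter, Finset.mem_univ, true_and, Finset.mem_insert]
      constructor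
      · intro h
        rcases eq_or_lt_of_le h with h' | h'
        · left; exact (Fin.ext h'.symm)
        · right; omega
      · rintro (rfl | h)
        · exact le_refl _
        · omega
    rw [hins, Finset.sum_insert (by simp)]
  have hνk : ∀ k : Fin K, ν k = S k.val - S (k.val + 1) := by
    intro k
    rw [hstep k]
    abel
  have htri : ∀ k : Fin K, snorm (ν k) ≤ snorm (S k.val) + snorm (S (k.val + 1)) := by
    intro k
    calc snorm (ν k) = snorm (S k.val - S (k.val + 1)) := by rw [← hνk k]
      _ ≤ _ := snorm_sub_le _ _
  have hknorm : knorm ν ≤ ∑ k : Fin K, snorm (ν k) := by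
    rw [knorm, kdot]
    calc Real.sqrt (∑ k : Fin K, sdot (ν k) (ν k))
        = Real.sqrt (∑ k : Fin K, snorm (ν k) ^ 2) := by
          rw [Finset.sum_congr rfl fun (k : Fin K) _ => (sq_snorm (ν k)).symm]
      _ ≤ Real.sqrt ((∑ k : Fin K, snorm (ν k)) ^ 2) :=
          Real.sqrt_le_sqrt (Finset.sum_sq_le_sq_sum_of_nonneg fun k _ => snorm_nonneg _)
      _ = ∑ k : Fin K, snorm (ν k) :=
          Real.sqrt_sq (Finset.sum_nonneg fun k _ => snorm_nonneg _)
  have hshift : ∑ k : Fin K, snorm (S (k.val + 1)) ≤ ∑ k : Fin K, snorm (S k.val) := by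
    have e1 : ∑ k : Fin K, snorm (S (k.val + 1)) = ∑ j ∈ Finset.range K, snorm (S (j + 1)) :=
      Fin.sum_univ_eq_sum_range (fun j => snorm (S (j + 1))) K
    have e2 : ∑ k : Fin K, snorm (S k.val) = ∑ j ∈ Finset.range K, snorm (S j) :=
      Fin.sum_univ_eq_sum_range (fun j => snorm (S j)) K
    have e3 : ∑ j ∈ Finset.range (K + 1), snorm (S j)
        = (∑ j ∈ Finset.range K, snorm (S (j + 1))) + snorm (S 0) :=
      Finset.sum_range_succ' _ K
    have e4 : ∑ j ∈ Finset.range (K + 1), snorm (S j)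
        = (∑ j ∈ Finset.range K, snorm (S j)) + snorm (S K) :=
      Finset.sum_range_succ _ K
    have e5 : snorm (S K) = 0 := by rw [hSK, snorm_zero]
    have e6 := snorm_nonneg (S 0)
    rw [e1, e2]
    linarith
  have h2 := main ν hν
  have c2 : ∑ k : Fin K, snorm (ν k)
      ≤ (∑ k : Fin K, snorm (S k.val)) + ∑ k : Fin K, snorm (S (k.val + 1)) := by
    rw [← Finset.sum_add_distrib]
    exact Finset.sum_le_sum fun k _ => htri k
  have c3 : ∑ k : Fin K, snorm (S k.val)
      = ∑ k : Fin K, snorm (∑ ℓ ∈ Finset.Ici k, ν ℓ) :=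
    Finset.sum_congr rfl fun k _ => by rw [hσS k]
  rw [hn] at hknorm
  linarith

end SpinGlassStmt
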